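/- Let φ₃ > 0 and φ₁, φ̄₁ be complex conjugate roots with φ₁ + φ̄₁ = 4c − φ₃ for some c < 0. Then for all ϕ ≥ 0, (ϕ − φ₁)(ϕ − φ̄₁) ≥ 4c², and consequently ∫₀^{φ₃} dϕ/√(ϕ(φ₃ − ϕ)(ϕ − φ₁)(ϕ − φ̄₁)) ≤ (1/(2|c|)) ∫₀¹ dx/√(x(1−x)). -/

import Mathlib

open MeasureTheory

lemma intInt_half : IntervalIntegrable (fun x : ℝ => 1 / Real.sqrt (x * (1 - x)))
    volume 0 (1/2) := by
  have hdom : IntervalIntegrable (fun x : ℝ => Real.sqrt 2 * x ^ (-(1:ℝ)/2)) volume 0 (1/2) :=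
    (intervalIntegral.intervalIntegrable_rpow' (by norm_num)).const_mul _
  rw [intervalIntegrable_iff] at hdom ⊢
  refine hdom.mono' ?_ ?_
  · apply Measurable.aestronglyMeasurable
    have : Measurable fun x : ℝ => Real.sqrt (x * (1 - x)) := by fun_prop
    simpa [one_div] using this
  · filter_upwards [MeasureTheory.self_mem_ae_restrict measurableSet_uIoc] with x hx
    rw [Set.uIoc_of_le (by norm_num : (0:ℝ) ≤ 1/2)] at hx
    obtain ⟨hx0, hx1⟩ := hx
    have h1x : (1:ℝ)/2 ≤ 1 - x := by linarith
    have hs : Real.sqrt x * Real.sqrt (1/2) ≤ Real.sqrt (x * (1 - x)) := by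
      rw [← Real.sqrt_mul hx0.le]
      exact Real.sqrt_le_sqrt (by nlinarith)
    have hxpos : 0 < Real.sqrt x := Real.sqrt_pos.2 hx0
    have hpos : 0 < Real.sqrt x * Real.sqrt (1/2) :=
      mul_pos hxpos (Real.sqrt_pos.2 (by norm_num))
    rw [Real.norm_eq_abs, abs_of_nonneg (by positivity)]
    have : 1 / Real.sqrt (x * (1 - x)) ≤ 1 / (Real.sqrt x * Real.sqrt (1/2)) :=
      one_div_le_one_div_of_le hpos hs
    refine this.trans (le_of_eq ?_)
    have hrs : x ^ (-(1:ℝ)/2) = (Real.sqrt x)⁻¹ := by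
      rw [Real.sqrt_eq_rpow, ← Real.rpow_neg hx0.le]
      norm_num
    rw [hrs, show (1:ℝ)/2 = (2:ℝ)⁻¹ by norm_num, Real.sqrt_inv]
    field_simp

lemma intInt_full : IntervalIntegrable (fun x : ℝ => 1 / Real.sqrt (x * (1 - x)))
    volume 0 1 := by
  have h2 : IntervalIntegrable (fun x : ℝ => 1 / Real.sqrt (x * (1 - x)))
      volume (1/2) 1 := by
    have := (intInt_half.comp_sub_left 1).symm
    norm_num at this
    convert this using 2 with x
    ring_nf
  exact intInt_half.trans h2

lemma intInt_scaled (φ₃ : ℝ) (hφ₃ : 0 < φ₃) :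
    IntervalIntegrable (fun ϕ : ℝ => 1 / Real.sqrt (ϕ * (φ₃ - ϕ))) volume 0 φ₃ := by
  have key : ∀ ϕ : ℝ, 1 / Real.sqrt (ϕ * (φ₃ - ϕ))
      = (1/φ₃) * (1 / Real.sqrt ((ϕ/φ₃) * (1 - ϕ/φ₃))) := by
    intro ϕ
    have h1 : ϕ * (φ₃ - ϕ) = φ₃^2 * ((ϕ/φ₃) * (1 - ϕ/φ₃)) := by
      field_simp
    rw [h1, Real.sqrt_mul (by positivity), Real.sqrt_sq hφ₃.le]
    rw [one_div, mul_inv, one_div, one_div]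
  simp_rw [key]
  have := (intInt_full.comp_mul_left (c := 1/φ₃)).const_mul (1/φ₃)
  simp only [div_zero, zero_div] at this
  rw [show (1:ℝ) / (1/φ₃) = φ₃ by field_simp] at this
  convert this using 3 with x
  rw [show x/φ₃*(1-x/φ₃) = 1/φ₃*x*(1-1/φ₃*x) by ring]

theorem period_bound (c φ₃ : ℝ) (z : ℂ) (hc : c < 0) (hφ₃ : 0 < φ₃)
    (hz : z.im ≠ 0) (hsum : z + (starRingEnd ℂ) z = ((4 * c - φ₃ : ℝ) : ℂ)) :
    (∀ ϕ : ℝ, 0 ≤ ϕ → 4 * c ^ 2 ≤ (ϕ - z.re) ^ 2 + z.im ^ 2) ∧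
    (∫ ϕ in (0:ℝ)..φ₃,
        1 / Real.sqrt (ϕ * (φ₃ - ϕ) * ((ϕ - z.re) ^ 2 + z.im ^ 2)))
      ≤ (1 / (2 * |c|)) * ∫ x in (0:ℝ)..1, 1 / Real.sqrt (x * (1 - x)) := by
  have hre : 2 * z.re = 4 * c - φ₃ := by
    have := hsum
    rw [Complex.add_conj] at this
    exact_mod_cast this
  have hpart1 : ∀ ϕ : ℝ, 0 ≤ ϕ → 4 * c ^ 2 ≤ (ϕ - z.re) ^ 2 + z.im ^ 2 := by
    intro ϕ hϕ
    nlinarith [sq_nonneg z.im, sq_nonneg (ϕ - z.re), sq_nonneg ϕ, sq_nonneg (ϕ + φ₃/2)]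
  refine ⟨hpart1, ?_⟩
  set f : ℝ → ℝ := fun ϕ => 1 / Real.sqrt (ϕ * (φ₃ - ϕ) * ((ϕ - z.re) ^ 2 + z.im ^ 2)) with hf
  set G : ℝ → ℝ := fun ϕ => (1 / (2 * |c|)) * (1 / Real.sqrt (ϕ * (φ₃ - ϕ))) with hG
  have hcabs : 0 < |c| := abs_pos.2 hc.ne
  have hGint : IntervalIntegrable G volume 0 φ₃ := (intInt_scaled φ₃ hφ₃).const_mul _
  have hle : ∀ ϕ ∈ Set.Icc (0:ℝ) φ₃, f ϕ ≤ G ϕ := by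
    intro ϕ hϕ
    obtain ⟨h0, h3⟩ := hϕ
    have hs : 0 ≤ ϕ * (φ₃ - ϕ) := mul_nonneg h0 (by linarith)
    have hQ : 4 * c ^ 2 ≤ (ϕ - z.re) ^ 2 + z.im ^ 2 := hpart1 ϕ h0
    have hsplit : Real.sqrt (ϕ * (φ₃ - ϕ) * ((ϕ - z.re) ^ 2 + z.im ^ 2))
        = Real.sqrt (ϕ * (φ₃ - ϕ)) * Real.sqrt ((ϕ - z.re) ^ 2 + z.im ^ 2) :=
      Real.sqrt_mul hs _
    have hQs : 2 * |c| ≤ Real.sqrt ((ϕ - z.re) ^ 2 + z.im ^ 2) := by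
      have : Real.sqrt (4 * c ^ 2) ≤ Real.sqrt ((ϕ - z.re) ^ 2 + z.im ^ 2) :=
        Real.sqrt_le_sqrt hQ
      rwa [show (4 : ℝ) * c ^ 2 = (2 * |c|)^2 by rw [mul_pow]; rw [sq_abs]; ring,
        Real.sqrt_sq (by positivity)] at this
    rcases eq_or_lt_of_le hs with hs0 | hs0
    · simp only [hf, hG, ← hs0]
      simp
    · have hspos : 0 < Real.sqrt (ϕ * (φ₃ - ϕ)) := Real.sqrt_pos.2 hs0
      have hden : 0 < 2 * |c| * Real.sqrt (ϕ * (φ₃ - ϕ)) := by positivity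
      have : f ϕ ≤ 1 / (Real.sqrt (ϕ * (φ₃ - ϕ)) * (2 * |c|)) := by
        simp only [hf]
        rw [hsplit]
        apply one_div_le_one_div_of_le (by positivity)
        exact mul_le_mul_of_nonneg_left hQs hspos.le
      refine this.trans (le_of_eq ?_)
      simp only [hG, one_div]
      rw [mul_inv]
      ring
  have hfint : IntervalIntegrable f volume 0 φ₃ := by
    rw [intervalIntegrable_iff]
    refine (hGint.1.mono_set ?_).mono' ?_ ?_
    · rw [Set.uIoc_of_le hφ₃.le]
    · apply Measurable.aestronglyMeasurable
      have : Measurable fun ϕ : ℝ =>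
          Real.sqrt (ϕ * (φ₃ - ϕ) * ((ϕ - z.re) ^ 2 + z.im ^ 2)) := by fun_prop
      simpa [hf, one_div] using this
    · filter_upwards [MeasureTheory.self_mem_ae_restrict measurableSet_uIoc] with x hx
      rw [Set.uIoc_of_le hφ₃.le] at hx
      have hx' : x ∈ Set.Icc (0:ℝ) φ₃ := ⟨hx.1.le, hx.2⟩
      rw [Real.norm_eq_abs, abs_of_nonneg (by positivity)]
      exact hle x hx'
  have hmono := intervalIntegral.integral_mono_on hφ₃.le hfint hGint hle
  refine hmono.trans (le_of_eq ?_)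
  rw [hG]
  rw [intervalIntegral.integral_const_mul]
  congr 1
  have key : ∀ ϕ : ℝ, 1 / Real.sqrt (ϕ * (φ₃ - ϕ))
      = (1/φ₃) * (1 / Real.sqrt ((ϕ/φ₃) * (1 - ϕ/φ₃))) := by
    intro ϕ
    have h1 : ϕ * (φ₃ - ϕ) = φ₃^2 * ((ϕ/φ₃) * (1 - ϕ/φ₃)) := by
      field_simp
    rw [h1, Real.sqrt_mul (by positivity), Real.sqrt_sq hφ₃.le]
    rw [one_div, mul_inv, one_div, one_div]
  simp_rw [key]
  rw [intervalIntegral.integral_const_mul,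
    intervalIntegral.integral_comp_div (c := φ₃)
      (f := fun x => 1 / Real.sqrt (x * (1 - x))) hφ₃.ne']
  rw [zero_div, div_self hφ₃.ne', smul_eq_mul]
  rw [← mul_assoc, one_div, inv_mul_cancel₀ hφ₃.ne', one_mul]
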